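/- For every n ≥ 3, the singular braid monoid SBₙ is isomorphic to the monoid defined by the presentation with generators σ₁, σ₁⁻¹, σ, σ⁻¹, x₁ and relations: σ₁σⁱσ₁σ⁻ⁱ = σⁱσ₁σ⁻ⁱσ₁ for 2 ≤ i ≤ n/2; σⁿ = (σσ₁)ⁿ⁻¹; x₁σⁱσ₁σ⁻ⁱ = σⁱσ₁σ⁻ⁱx₁ for i = 0, 2, 3, …, n−2; x₁σⁱx₁σ⁻ⁱ = σⁱx₁σ⁻ⁱx₁ for 2 ≤ i ≤ n/2; σⁿx₁ = x₁σⁿ; x₁σσ₁σ⁻¹σ₁ = σσ₁σ⁻¹σ₁σx₁σ⁻¹; σ₁σ₁⁻¹ = σ₁⁻¹σ₁ = 1; and σσ⁻¹ = σ⁻¹σ = 1; an isomorphism is given by σ₁ ↦ σ₁, x₁ ↦ x₁, and σ ↦ σ₁σ₂⋯σₙ₋₁. -/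

import Mathlib

/-!
STATEMENT 8: For every n ≥ 3, the singular braid monoid SBₙ is isomorphic to
the monoid presented by generators σ₁, σ₁⁻¹, σ, σ⁻¹, x₁ with the relations
listed below, via σ₁ ↦ σ₁, x₁ ↦ x₁, σ ↦ σ₁σ₂⋯σₙ₋₁.
-/

open FreeMonoid

/-- Generators of the singular braid monoid `SBₙ`: `σᵢ`, `σᵢ⁻¹`, `xᵢ` for
`i = 1, …, n-1` (index `i : Fin (n-1)` stands for subscript `i+1`). -/
inductive SBGen (n : ℕ) : Type
  | sig (i : Fin (n - 1)) : SBGen n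
  | sinv (i : Fin (n - 1)) : SBGen n
  | x (i : Fin (n - 1)) : SBGen n

open SBGen in
/-- The defining relations of the singular braid monoid `SBₙ`. -/
inductive sbRel (n : ℕ) : FreeMonoid (SBGen n) → FreeMonoid (SBGen n) → Prop
  | comm_ss (i j : Fin (n - 1)) (h : i.val + 1 < j.val ∨ j.val + 1 < i.val) :
      sbRel n (of (sig i) * of (sig j)) (of (sig j) * of (sig i))
  | comm_xx (i j : Fin (n - 1)) (h : i.val + 1 < j.val ∨ j.val + 1 < i.val) :
      sbRel n (of (x i) * of (x j)) (of (x j) * of (x i))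
  | comm_xs (i j : Fin (n - 1)) (h : i.val + 1 ≠ j.val ∧ j.val + 1 ≠ i.val) :
      sbRel n (of (x i) * of (sig j)) (of (sig j) * of (x i))
  | braid (i j : Fin (n - 1)) (h : j.val = i.val + 1) :
      sbRel n (of (sig i) * of (sig j) * of (sig i))
              (of (sig j) * of (sig i) * of (sig j))
  | braid_x₁ (i j : Fin (n - 1)) (h : j.val = i.val + 1) :
      sbRel n (of (sig i) * of (sig j) * of (x i))
              (of (x j) * of (sig i) * of (sig j))
  | braid_x₂ (i j : Fin (n - 1)) (h : j.val = i.val + 1) :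
      sbRel n (of (sig j) * of (sig i) * of (x j))
              (of (x i) * of (sig j) * of (sig i))
  | inv_right (i : Fin (n - 1)) : sbRel n (of (sig i) * of (sinv i)) 1
  | inv_left (i : Fin (n - 1)) : sbRel n (of (sinv i) * of (sig i)) 1

/-- The singular braid monoid `SBₙ`. -/
def SingBraidMonoid (n : ℕ) : Type := PresentedMonoid (sbRel n)

instance (n : ℕ) : Monoid (SingBraidMonoid n) :=
  inferInstanceAs (Monoid (PresentedMonoid (sbRel n)))

/-- The five generators σ₁, σ₁⁻¹, σ, σ⁻¹ and x₁. -/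
inductive FiveGen : Type
  | s1 : FiveGen
  | s1i : FiveGen
  | s : FiveGen
  | si : FiveGen
  | x1 : FiveGen

open FiveGen in
/-- The relations of the five-generator presentation of `SBₙ`
(`σ⁻ⁱ` is written with the generator σ⁻¹). -/
inductive fiveGenRel (n : ℕ) : FreeMonoid FiveGen → FreeMonoid FiveGen → Prop
  | rel₁ (i : ℕ) (h₁ : 2 ≤ i) (h₂ : 2 * i ≤ n) :
      fiveGenRel n (of s1 * (of s) ^ i * of s1 * (of si) ^ i)
                   ((of s) ^ i * of s1 * (of si) ^ i * of s1)
  | rel₂ : fiveGenRel n ((of s) ^ n) ((of s * of s1) ^ (n - 1))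
  | rel₃ (i : ℕ) (h : i = 0 ∨ (2 ≤ i ∧ i ≤ n - 2)) :
      fiveGenRel n (of x1 * (of s) ^ i * of s1 * (of si) ^ i)
                   ((of s) ^ i * of s1 * (of si) ^ i * of x1)
  | rel₄ (i : ℕ) (h₁ : 2 ≤ i) (h₂ : 2 * i ≤ n) :
      fiveGenRel n (of x1 * (of s) ^ i * of x1 * (of si) ^ i)
                   ((of s) ^ i * of x1 * (of si) ^ i * of x1)
  | rel₅ : fiveGenRel n ((of s) ^ n * of x1) (of x1 * (of s) ^ n)
  | rel₆ : fiveGenRel n (of x1 * of s * of s1 * of si * of s1)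
                        (of s * of s1 * of si * of s1 * of s * of x1 * of si)
  | inv₁ : fiveGenRel n (of s1 * of s1i) 1
  | inv₂ : fiveGenRel n (of s1i * of s1) 1
  | inv₃ : fiveGenRel n (of s * of si) 1
  | inv₄ : fiveGenRel n (of si * of s) 1

namespace SB5

open PresentedMonoid

theorem pm_sound {α : Type*} {rels : FreeMonoid α → FreeMonoid α → Prop} {a b : FreeMonoid α}
    (h : rels a b) : PresentedMonoid.mk rels a = PresentedMonoid.mk rels b :=
  Quotient.sound (ConGen.Rel.of a b h)

variable (n : ℕ)

/-- σ generators with junk value 1 out of range -/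
def aS (k : ℕ) : SingBraidMonoid n :=
  if h : k < n - 1 then PresentedMonoid.of (sbRel n) (SBGen.sig ⟨k, h⟩) else 1

def bS (k : ℕ) : SingBraidMonoid n :=
  if h : k < n - 1 then PresentedMonoid.of (sbRel n) (SBGen.sinv ⟨k, h⟩) else 1

def xS (k : ℕ) : SingBraidMonoid n :=
  if h : k < n - 1 then PresentedMonoid.of (sbRel n) (SBGen.x ⟨k, h⟩) else 1

variable {n}

theorem aS_eq {k : ℕ} (h : k < n - 1) : aS n k = PresentedMonoid.of (sbRel n) (SBGen.sig ⟨k, h⟩) :=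
  dif_pos h

theorem bS_eq {k : ℕ} (h : k < n - 1) : bS n k = PresentedMonoid.of (sbRel n) (SBGen.sinv ⟨k, h⟩) :=
  dif_pos h

theorem xS_eq {k : ℕ} (h : k < n - 1) : xS n k = PresentedMonoid.of (sbRel n) (SBGen.x ⟨k, h⟩) :=
  dif_pos h

theorem aS_one {k : ℕ} (h : ¬ k < n - 1) : aS n k = 1 := dif_neg h
theorem bS_one {k : ℕ} (h : ¬ k < n - 1) : bS n k = 1 := dif_neg h
theorem xS_one {k : ℕ} (h : ¬ k < n - 1) : xS n k = 1 := dif_neg h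

theorem aS_mul_bS (k : ℕ) : aS n k * bS n k = 1 := by
  by_cases h : k < n - 1
  · rw [aS_eq h, bS_eq h]
    have hpm := pm_sound (sbRel.inv_right ⟨k, h⟩); simp only [map_mul, map_one] at hpm ⊢; exact hpm
  · rw [aS_one h, bS_one h, one_mul]

theorem bS_mul_aS (k : ℕ) : bS n k * aS n k = 1 := by
  by_cases h : k < n - 1
  · rw [aS_eq h, bS_eq h]
    have hpm := pm_sound (sbRel.inv_left ⟨k, h⟩); simp only [map_mul, map_one] at hpm ⊢; exact hpm
  · rw [aS_one h, bS_one h, one_mul]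

/-- the unit corresponding to σₖ -/
def uA (k : ℕ) : (SingBraidMonoid n)ˣ := ⟨aS n k, bS n k, aS_mul_bS k, bS_mul_aS k⟩

theorem comm_aa {k l : ℕ} (h : k + 2 ≤ l) : Commute (aS n k) (aS n l) := by
  by_cases hl : l < n - 1
  · rw [aS_eq hl, aS_eq (show k < n - 1 by omega)]
    have := pm_sound (sbRel.comm_ss ⟨k, by omega⟩ ⟨l, hl⟩ (Or.inl (show k + 1 < l by omega)))
    simp only [map_mul] at this ⊢; exact this
  · rw [aS_one hl]; exact Commute.one_right _

theorem comm_xxS {k l : ℕ} (h : k + 2 ≤ l) : Commute (xS n k) (xS n l) := by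
  by_cases hl : l < n - 1
  · rw [xS_eq hl, xS_eq (show k < n - 1 by omega)]
    have := pm_sound (sbRel.comm_xx ⟨k, by omega⟩ ⟨l, hl⟩ (Or.inl (show k + 1 < l by omega)))
    simp only [map_mul] at this ⊢; exact this
  · rw [xS_one hl]; exact Commute.one_right _

theorem comm_xa {k l : ℕ} (h1 : k + 1 ≠ l) (h2 : l + 1 ≠ k) : Commute (xS n k) (aS n l) := by
  by_cases hk : k < n - 1
  · by_cases hl : l < n - 1
    · rw [aS_eq hl, xS_eq hk]
      have := pm_sound (sbRel.comm_xs ⟨k, hk⟩ ⟨l, hl⟩ ⟨h1, h2⟩)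
      simp only [map_mul] at this ⊢; exact this
    · rw [aS_one hl]; exact Commute.one_right _
  · rw [xS_one hk]; exact Commute.one_left _

theorem braidS {k : ℕ} (h : k + 1 < n - 1) :
    aS n k * aS n (k+1) * aS n k = aS n (k+1) * aS n k * aS n (k+1) := by
  rw [aS_eq h, aS_eq (show k < n - 1 by omega)]
  have hpm := pm_sound (sbRel.braid ⟨k, by omega⟩ ⟨k+1, h⟩ rfl); simp only [map_mul] at hpm ⊢; exact hpm

theorem braid_x1S {k : ℕ} (h : k + 1 < n - 1) :
    aS n k * aS n (k+1) * xS n k = xS n (k+1) * aS n k * aS n (k+1) := by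
  rw [aS_eq h, aS_eq (show k < n - 1 by omega), xS_eq h, xS_eq (show k < n - 1 by omega)]
  have hpm := pm_sound (sbRel.braid_x₁ ⟨k, by omega⟩ ⟨k+1, h⟩ rfl); simp only [map_mul] at hpm ⊢; exact hpm

theorem braid_x2S {k : ℕ} (h : k + 1 < n - 1) :
    aS n (k+1) * aS n k * xS n (k+1) = xS n k * aS n (k+1) * aS n k := by
  rw [aS_eq h, aS_eq (show k < n - 1 by omega), xS_eq h, xS_eq (show k < n - 1 by omega)]
  have hpm := pm_sound (sbRel.braid_x₂ ⟨k, by omega⟩ ⟨k+1, h⟩ rfl); simp only [map_mul] at hpm ⊢; exact hpm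

end SB5
namespace SB5

variable {n : ℕ}

/-- ascending product `a_j a_{j+1} ⋯ a_{j+k-1}` -/
def wA (n : ℕ) (j : ℕ) : ℕ → SingBraidMonoid n
  | 0 => 1
  | (k+1) => wA n j k * aS n (j+k)

/-- descending product `a_{j+k-1} ⋯ a_j` -/
def rW (n : ℕ) (j : ℕ) : ℕ → SingBraidMonoid n
  | 0 => 1
  | (k+1) => aS n (j+k) * rW n j k

/-- descending product of inverses `b_{j+k-1} ⋯ b_j` -/
def wB (n : ℕ) (j : ℕ) : ℕ → SingBraidMonoid n
  | 0 => 1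
  | (k+1) => bS n (j+k) * wB n j k

theorem wA_succ (j k : ℕ) : wA n j (k+1) = wA n j k * aS n (j+k) := rfl
theorem rW_succ (j k : ℕ) : rW n j (k+1) = aS n (j+k) * rW n j k := rfl

theorem wA_mul_wB (j k : ℕ) : wA n j k * wB n j k = 1 := by
  induction k with
  | zero => exact one_mul 1
  | succ k ih =>
      show (wA n j k * aS n (j+k)) * (bS n (j+k) * wB n j k) = 1
      rw [mul_assoc, ← mul_assoc (aS n (j+k)), aS_mul_bS, one_mul, ih]

theorem wB_mul_wA (j k : ℕ) : wB n j k * wA n j k = 1 := by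
  induction k with
  | zero => exact one_mul 1
  | succ k ih =>
      show (bS n (j+k) * wB n j k) * (wA n j k * aS n (j+k)) = 1
      rw [mul_assoc, ← mul_assoc (wB n j k), ih, one_mul, bS_mul_aS]

/-- the unit corresponding to `wA j k` -/
def uW (n : ℕ) (j k : ℕ) : (SingBraidMonoid n)ˣ :=
  ⟨wA n j k, wB n j k, wA_mul_wB j k, wB_mul_wA j k⟩

theorem wA_append (j k l : ℕ) : wA n j (k+l) = wA n j k * wA n (j+k) l := by
  induction l with
  | zero => simp [wA]
  | succ l ih =>
      show wA n j (k+l) * aS n (j+(k+l)) = _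
      rw [ih, wA_succ, mul_assoc, add_assoc]

/-- far commutation with ascending products -/
theorem comm_a_wA {m j k : ℕ} (h : m + 2 ≤ j ∨ j + k + 1 ≤ m) :
    Commute (aS n m) (wA n j k) := by
  induction k with
  | zero => exact Commute.one_right _
  | succ k ih =>
      rcases h with h | h
      · exact (ih (Or.inl h)).mul_right (comm_aa (by omega))
      · exact (ih (Or.inr (by omega))).mul_right (comm_aa (by omega : j+k+2 ≤ m)).symm

theorem comm_x_wA {m j k : ℕ} (h : m + 2 ≤ j ∨ j + k + 1 ≤ m) :
    Commute (xS n m) (wA n j k) := by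
  induction k with
  | zero => exact Commute.one_right _
  | succ k ih =>
      rcases h with h | h
      · exact (ih (Or.inl h)).mul_right (comm_xa (by omega) (by omega))
      · exact (ih (Or.inr (by omega))).mul_right (comm_xa (by omega) (by omega))

theorem comm_a_rW {m j k : ℕ} (h : m + 2 ≤ j ∨ j + k + 1 ≤ m) :
    Commute (aS n m) (rW n j k) := by
  induction k with
  | zero => exact Commute.one_right _
  | succ k ih =>
      rcases h with h | h
      · exact Commute.mul_right (comm_aa (by omega)) (ih (Or.inl h))
      · exact Commute.mul_right (comm_aa (by omega : j+k+2 ≤ m)).symm (ih (Or.inr (by omega)))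

theorem comm_x_rW {m j k : ℕ} (h : m + 2 ≤ j ∨ j + k + 1 ≤ m) :
    Commute (xS n m) (rW n j k) := by
  induction k with
  | zero => exact Commute.one_right _
  | succ k ih =>
      rcases h with h | h
      · exact Commute.mul_right (comm_xa (by omega) (by omega)) (ih (Or.inl h))
      · exact Commute.mul_right (comm_xa (by omega) (by omega)) (ih (Or.inr (by omega)))

/-- the shift property: `(a_0⋯a_{m-1}) a_i = a_{i+1} (a_0⋯a_{m-1})` for `i + 2 ≤ m ≤ n-1`. -/
theorem shiftA {m i : ℕ} (him : i + 2 ≤ m) (hm : m ≤ n - 1) :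
    wA n 0 m * aS n i = aS n (i+1) * wA n 0 m := by
  have hdec : wA n 0 m = wA n 0 i * (aS n i * aS n (i+1)) * wA n (i+2) (m - (i+2)) := by
    have h1 : m = (i + 2) + (m - (i+2)) := by omega
    rw [h1, wA_append, wA_append]
    simp [wA, wA_succ, mul_assoc]
  rw [hdec]
  have c1 : Commute (aS n i) (wA n (i+2) (m - (i+2))) := comm_a_wA (Or.inl (by omega))
  have c2 : Commute (aS n (i+1)) (wA n 0 i) := comm_a_wA (Or.inr (by omega))
  have hb : aS n i * aS n (i+1) * aS n i = aS n (i+1) * aS n i * aS n (i+1) :=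
    braidS (by omega)
  calc wA n 0 i * (aS n i * aS n (i+1)) * wA n (i+2) (m-(i+2)) * aS n i
      = wA n 0 i * (aS n i * aS n (i+1) * aS n i) * wA n (i+2) (m-(i+2)) := by
        simp only [mul_assoc]; rw [← c1.eq]
    _ = wA n 0 i * (aS n (i+1) * aS n i * aS n (i+1)) * wA n (i+2) (m-(i+2)) := by rw [hb]
    _ = aS n (i+1) * (wA n 0 i * (aS n i * aS n (i+1)) * wA n (i+2) (m-(i+2))) := by
        simp only [mul_assoc]; exact c2.symm.left_comm _

theorem shiftX {m i : ℕ} (him : i + 2 ≤ m) (hm : m ≤ n - 1) :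
    wA n 0 m * xS n i = xS n (i+1) * wA n 0 m := by
  have hdec : wA n 0 m = wA n 0 i * (aS n i * aS n (i+1)) * wA n (i+2) (m - (i+2)) := by
    have h1 : m = (i + 2) + (m - (i+2)) := by omega
    rw [h1, wA_append, wA_append]
    simp [wA, wA_succ, mul_assoc]
  rw [hdec]
  have c1 : Commute (xS n i) (wA n (i+2) (m - (i+2))) := comm_x_wA (Or.inl (by omega))
  have c2 : Commute (xS n (i+1)) (wA n 0 i) := comm_x_wA (Or.inr (by omega))
  have hb : aS n i * aS n (i+1) * xS n i = xS n (i+1) * aS n i * aS n (i+1) :=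
    braid_x1S (by omega)
  calc wA n 0 i * (aS n i * aS n (i+1)) * wA n (i+2) (m-(i+2)) * xS n i
      = wA n 0 i * (aS n i * aS n (i+1) * xS n i) * wA n (i+2) (m-(i+2)) := by
        simp only [mul_assoc]; rw [← c1.eq]
    _ = wA n 0 i * (xS n (i+1) * aS n i * aS n (i+1)) * wA n (i+2) (m-(i+2)) := by rw [hb]
    _ = xS n (i+1) * (wA n 0 i * (aS n i * aS n (i+1)) * wA n (i+2) (m-(i+2))) := by
        simp only [mul_assoc]; exact c2.symm.left_comm _

end SB5
namespace SB5

variable {n : ℕ}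

theorem aS_arg {i j : ℕ} (h : i = j) : aS n i = aS n j := by rw [h]

theorem wA_succ0 (k : ℕ) : wA n 0 (k+1) = wA n 0 k * aS n k := by
  rw [wA_succ, Nat.zero_add]

theorem shift_pow_a {i k : ℕ} (h : i + k + 1 ≤ n - 1) :
    (wA n 0 (n-1))^k * aS n i = aS n (i+k) * (wA n 0 (n-1))^k := by
  induction k generalizing i with
  | zero => simp
  | succ k ih =>
      calc (wA n 0 (n-1))^(k+1) * aS n i
          = (wA n 0 (n-1))^k * (wA n 0 (n-1) * aS n i) := by rw [pow_succ, mul_assoc]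
        _ = (wA n 0 (n-1))^k * aS n (i+1) * (wA n 0 (n-1)) := by
            rw [shiftA (i := i) (by omega) (le_refl _), mul_assoc]
        _ = aS n (i+1+k) * (wA n 0 (n-1))^k * (wA n 0 (n-1)) := by rw [ih (by omega)]
        _ = aS n (i+(k+1)) * (wA n 0 (n-1))^(k+1) := by
            rw [aS_arg (by omega : i+1+k = i+(k+1)), mul_assoc, ← pow_succ]

theorem shift_pow_x {i k : ℕ} (h : i + k + 1 ≤ n - 1) :
    (wA n 0 (n-1))^k * xS n i = xS n (i+k) * (wA n 0 (n-1))^k := by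
  induction k generalizing i with
  | zero => simp
  | succ k ih =>
      calc (wA n 0 (n-1))^(k+1) * xS n i
          = (wA n 0 (n-1))^k * (wA n 0 (n-1) * xS n i) := by rw [pow_succ, mul_assoc]
        _ = (wA n 0 (n-1))^k * xS n (i+1) * (wA n 0 (n-1)) := by
            rw [shiftX (i := i) (by omega) (le_refl _), mul_assoc]
        _ = xS n (i+1+k) * (wA n 0 (n-1))^k * (wA n 0 (n-1)) := by rw [ih (by omega)]
        _ = xS n (i+(k+1)) * (wA n 0 (n-1))^(k+1) := by
            have : i+1+k = i+(k+1) := by omega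
            rw [this, mul_assoc, ← pow_succ]

theorem prefix_shift {m : ℕ} (h : m + 1 ≤ n - 1) :
    wA n 0 (n-1) * wA n 0 m = wA n 1 m * wA n 0 (n-1) := by
  induction m with
  | zero => simp [wA]
  | succ m ih =>
      calc wA n 0 (n-1) * wA n 0 (m+1)
          = (wA n 0 (n-1) * wA n 0 m) * aS n m := by rw [wA_succ0, mul_assoc]
        _ = wA n 1 m * (wA n 0 (n-1) * aS n m) := by rw [ih (by omega), mul_assoc]
        _ = wA n 1 m * (aS n (m+1) * wA n 0 (n-1)) := by
            rw [shiftA (i := m) (by omega) (le_refl _)]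
        _ = wA n 1 (m+1) * wA n 0 (n-1) := by
            rw [wA_succ, aS_arg (by omega : 1+m = m+1)]
            exact (mul_assoc _ _ _).symm

theorem claimA {k : ℕ} (h : k ≤ n - 2) :
    (wA n 0 (n-1) * aS n 0)^k = wA n 1 k * (wA n 0 (n-1))^k := by
  induction k with
  | zero => simp [wA]
  | succ k ih =>
      calc (wA n 0 (n-1) * aS n 0)^(k+1)
          = wA n 1 k * (wA n 0 (n-1))^k * (wA n 0 (n-1) * aS n 0) := by
            rw [pow_succ, ih (by omega)]
        _ = wA n 1 k * ((wA n 0 (n-1))^(k+1) * aS n 0) := by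
            rw [mul_assoc, ← mul_assoc ((wA n 0 (n-1))^k), ← pow_succ]
        _ = wA n 1 k * (aS n (0+(k+1)) * (wA n 0 (n-1))^(k+1)) := by
            rw [shift_pow_a (i := 0) (k := k+1) (by omega)]
        _ = wA n 1 (k+1) * (wA n 0 (n-1))^(k+1) := by
            rw [wA_succ, aS_arg (by omega : 0+(k+1) = 1+k)]
            exact (mul_assoc _ _ _).symm

theorem rel2S (hn : 3 ≤ n) :
    (wA n 0 (n-1))^n = (wA n 0 (n-1) * aS n 0)^(n-1) := by
  have hD : wA n 0 (n-1) = wA n 0 (n-2) * aS n (n-2) := by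
    conv_lhs => rw [(by omega : n-1 = (n-2)+1)]
    exact wA_succ0 (n-2)
  have hD2 : wA n 0 (n-1) * wA n 0 (n-1) = wA n 1 (n-2) * (wA n 0 (n-1) * aS n (n-2)) := by
    calc wA n 0 (n-1) * wA n 0 (n-1)
        = wA n 0 (n-1) * wA n 0 (n-2) * aS n (n-2) := by
          nth_rewrite 2 [hD]
          rw [← mul_assoc]
      _ = wA n 1 (n-2) * wA n 0 (n-1) * aS n (n-2) := by
          rw [prefix_shift (m := n-2) (by omega)]
      _ = wA n 1 (n-2) * (wA n 0 (n-1) * aS n (n-2)) := by rw [mul_assoc]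
  calc (wA n 0 (n-1))^n
      = (wA n 0 (n-1) * wA n 0 (n-1)) * (wA n 0 (n-1))^(n-2) := by
        rw [← pow_two, ← pow_add, (by omega : 2 + (n-2) = n)]
    _ = wA n 1 (n-2) * (wA n 0 (n-1) * aS n (n-2)) * (wA n 0 (n-1))^(n-2) := by rw [hD2]
    _ = wA n 1 (n-2) * (wA n 0 (n-1) * (aS n (n-2) * (wA n 0 (n-1))^(n-2))) := by
        simp only [mul_assoc]
    _ = wA n 1 (n-2) * (wA n 0 (n-1) * ((wA n 0 (n-1))^(n-2) * aS n 0)) := by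
        rw [shift_pow_a (i := 0) (k := n-2) (by omega), aS_arg (by omega : 0+(n-2) = n-2)]
    _ = wA n 1 (n-2) * (wA n 0 (n-1))^(n-2) * (wA n 0 (n-1) * aS n 0) := by
        have hc : wA n 0 (n-1) * (wA n 0 (n-1))^(n-2) = (wA n 0 (n-1))^(n-2) * wA n 0 (n-1) :=
          (Commute.self_pow _ _).eq
        simp only [← mul_assoc]
        rw [mul_assoc (wA n 1 (n-2)), hc, ← mul_assoc]
    _ = (wA n 0 (n-1) * aS n 0)^(n-2) * (wA n 0 (n-1) * aS n 0) := by
        rw [claimA (by omega)]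
    _ = (wA n 0 (n-1) * aS n 0)^(n-1) := by rw [← pow_succ, (by omega : (n-2)+1 = n-1)]

/-- descending split : `rW j (k+l) = rW (j+k) l * rW j k` -/
theorem rW_split (j k l : ℕ) : rW n j (k+l) = rW n (j+k) l * rW n j k := by
  induction l with
  | zero => simp [rW]
  | succ l ih =>
      rw [(by omega : k + (l+1) = (k+l) + 1), rW_succ, ih, rW_succ, mul_assoc]
      congr 2
      omega

/-- the core braid computation -/
theorem coreS {p : ℕ} (hm : p + 2 ≤ n - 1) :
    aS n (p+1) * wA n 0 (p+1) * aS n (p+1) = wA n 0 (p+1) * aS n (p+1) * aS n p := by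
  have hdec : wA n 0 (p+1) = wA n 0 p * aS n p := wA_succ0 p
  have c : Commute (aS n (p+1)) (wA n 0 p) := comm_a_wA (Or.inr (by omega))
  have hb : aS n p * aS n (p+1) * aS n p = aS n (p+1) * aS n p * aS n (p+1) :=
    braidS (by omega)
  have hb' : aS n (p+1) * (aS n p * aS n (p+1)) = aS n p * (aS n (p+1) * aS n p) := by
    simp only [← mul_assoc]; exact hb.symm
  calc aS n (p+1) * wA n 0 (p+1) * aS n (p+1)
      = wA n 0 p * (aS n (p+1) * (aS n p * aS n (p+1))) := by
        rw [hdec]; simp only [mul_assoc]; exact c.left_comm _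
    _ = wA n 0 p * (aS n p * (aS n (p+1) * aS n p)) := by rw [hb']
    _ = wA n 0 (p+1) * aS n (p+1) * aS n p := by rw [hdec]; simp only [mul_assoc]

theorem sslS {q k m : ℕ} (h2 : q + 1 + k ≤ m) (hm : m ≤ n - 1) :
    rW n (q+1) k * wA n 0 m = wA n 0 m * rW n q k := by
  induction k with
  | zero => simp [rW]
  | succ k ih =>
      have hs : wA n 0 m * aS n (q + k) = aS n (q+1+k) * wA n 0 m := by
        rw [shiftA (i := q+k) (by omega) hm]
        exact congrArg (· * wA n 0 m) (aS_arg (by omega))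
      calc rW n (q+1) (k+1) * wA n 0 m
          = aS n (q+1+k) * (rW n (q+1) k * wA n 0 m) := by rw [rW_succ, mul_assoc]
        _ = aS n (q+1+k) * (wA n 0 m * rW n q k) := by rw [ih (by omega)]
        _ = wA n 0 m * (aS n (q+k) * rW n q k) := by
            rw [← mul_assoc, ← hs, mul_assoc]
        _ = wA n 0 m * rW n q (k+1) := by rw [rW_succ]

theorem slS {t r : ℕ} (hm : t + r + 2 ≤ n - 1) :
    rW n (t+1) (r+1) * wA n 0 (t+r+2) = wA n 0 (t+r+1) * rW n t (r+2) := by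
  have e1 : rW n (t+1) (r+1) = aS n (t+r+1) * rW n (t+1) r := by
    rw [rW_succ]; exact congrArg (· * rW n (t+1) r) (aS_arg (by omega))
  have e2 : wA n 0 (t+r+2) = wA n 0 (t+r+1) * aS n (t+r+1) := wA_succ0 (t+r+1)
  calc rW n (t+1) (r+1) * wA n 0 (t+r+2)
      = aS n (t+r+1) * (rW n (t+1) r * wA n 0 (t+r+2)) := by rw [e1, mul_assoc]
    _ = aS n (t+r+1) * (wA n 0 (t+r+2) * rW n t r) := by
        rw [sslS (by omega) (by omega)]
    _ = (aS n (t+r+1) * wA n 0 (t+r+1) * aS n (t+r+1)) * rW n t r := by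
        rw [e2]; simp only [mul_assoc]
    _ = (wA n 0 (t+r+1) * aS n (t+r+1) * aS n (t+r)) * rW n t r := by
        rw [coreS (p := t+r) (by omega)]
    _ = wA n 0 (t+r+1) * rW n t (r+2) := by
        have g1 : rW n t (r+2) = aS n (t+r+1) * (aS n (t+r) * rW n t r) := by
          rw [rW_succ, rW_succ, aS_arg (by omega : t+(r+1) = t+r+1)]
        rw [g1]; simp only [mul_assoc]

/-- `δ_{m+1}^k = δ_m^k ⬝ (a_m a_{m-1} ⋯ a_{m-k+1})` -/
theorem cClaim {s : ℕ} (hs : s + 1 ≤ n - 1) :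
    ∀ k t, k + t = s + 1 → (wA n 0 (s+1))^k = (wA n 0 s)^k * rW n t k := by
  intro k
  induction k with
  | zero => intro t _; simp [rW]
  | succ k ih =>
      intro t ht
      have step : rW n (t+1) k * wA n 0 (s+1) = wA n 0 s * rW n t (k+1) := by
        cases k with
        | zero =>
            simp only [rW, one_mul, mul_one]
            rw [wA_succ0 s, aS_arg (show t + 0 = s by omega)]
        | succ r =>
            have hm : t + r + 2 ≤ n - 1 := by omega
            have : s + 1 = t + r + 2 := by omega
            rw [this, slS hm, (by omega : t + r + 1 = s)]
      calc (wA n 0 (s+1))^(k+1)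
          = (wA n 0 (s+1))^k * wA n 0 (s+1) := pow_succ _ _
        _ = (wA n 0 s)^k * (rW n (t+1) k * wA n 0 (s+1)) := by
            rw [ih (t+1) (by omega), mul_assoc]
        _ = (wA n 0 s)^k * (wA n 0 s * rW n t (k+1)) := by rw [step]
        _ = (wA n 0 s)^(k+1) * rW n t (k+1) := by rw [← mul_assoc, ← pow_succ]

/-- x₁ commutes with the "band" word `ρ_m λ_m` -/
theorem lComm {m : ℕ} (hm : m ≤ n - 1) :
    Commute (xS n 0) (rW n 0 m * wA n 0 m) := by
  match m with
  | 0 => simpa [rW, wA] using Commute.one_right _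
  | 1 =>
      have hca : Commute (xS n 0) (aS n 0) := comm_xa (by omega) (by omega)
      have e : rW n 0 1 * wA n 0 1 = aS n 0 * aS n 0 := by
        show (aS n (0+0) * 1) * (1 * aS n (0+0)) = aS n 0 * aS n 0
        rw [mul_one, one_mul, Nat.add_zero]
      rw [e]
      exact hca.mul_right hca
  | (m+2) =>
      have hsplit : rW n 0 (m+2) = rW n 2 m * rW n 0 2 := by
        rw [(by omega : m + 2 = 2 + m), rW_split (j := 0) (k := 2) (l := m)]
      have hsplit2 : wA n 0 (m+2) = wA n 0 2 * wA n 2 m := by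
        rw [(by omega : m + 2 = 2 + m), wA_append]
      have hr2 : rW n 0 2 = aS n 1 * aS n 0 := by
        simp [rW, rW_succ]
      have hw2 : wA n 0 2 = aS n 0 * aS n 1 := by
        simp [wA, wA_succ]
      have cx1 : Commute (xS n 0) (rW n 2 m) := comm_x_rW (Or.inl (by omega))
      have cx2 : Commute (xS n 0) (wA n 2 m) := comm_x_wA (Or.inl (by omega))
      have hcore : xS n 0 * (aS n 1 * (aS n 0 * (aS n 0 * aS n 1)))
          = (aS n 1 * (aS n 0 * (aS n 0 * aS n 1))) * xS n 0 := by
        have h1 : aS n 0 * aS n 1 * xS n 0 = xS n 1 * aS n 0 * aS n 1 :=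
          braid_x1S (by omega)
        have h2 : aS n 1 * aS n 0 * xS n 1 = xS n 0 * aS n 1 * aS n 0 :=
          braid_x2S (by omega)
        calc xS n 0 * (aS n 1 * (aS n 0 * (aS n 0 * aS n 1)))
            = (xS n 0 * aS n 1 * aS n 0) * (aS n 0 * aS n 1) := by simp only [mul_assoc]
          _ = (aS n 1 * aS n 0 * xS n 1) * (aS n 0 * aS n 1) := by rw [← h2]
          _ = (aS n 1 * aS n 0) * (xS n 1 * aS n 0 * aS n 1) := by simp only [mul_assoc]
          _ = (aS n 1 * aS n 0) * (aS n 0 * aS n 1 * xS n 0) := by rw [← h1]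
          _ = (aS n 1 * (aS n 0 * (aS n 0 * aS n 1))) * xS n 0 := by simp only [mul_assoc]
      have : rW n 0 (m+2) * wA n 0 (m+2)
          = rW n 2 m * ((aS n 1 * (aS n 0 * (aS n 0 * aS n 1))) * wA n 2 m) := by
        rw [hsplit, hsplit2, hr2, hw2]; simp only [mul_assoc]
      rw [this]
      exact cx1.mul_right (Commute.mul_right hcore cx2)

/-- x₁ commutes with the full twist `δ_{m+1}^{m+1}` -/
theorem ftComm : ∀ {m : ℕ}, m ≤ n - 1 → Commute (xS n 0) ((wA n 0 m)^(m+1)) := by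
  intro m
  induction m with
  | zero => intro _; simpa [wA] using Commute.one_right _
  | succ s ih =>
      intro hs
      have key : (wA n 0 (s+1))^(s+2) = (wA n 0 s)^(s+1) * (rW n 0 (s+1) * wA n 0 (s+1)) := by
        rw [pow_succ, cClaim hs (s+1) 0 (by omega), mul_assoc]
      rw [key]
      exact (ih (by omega)).mul_right (lComm hs)

theorem rel5S (hn : 3 ≤ n) :
    Commute (xS n 0) ((wA n 0 (n-1))^n) := by
  have := ftComm (n := n) (m := n-1) (le_refl _)
  rwa [(by omega : n - 1 + 1 = n)] at this

end SB5
namespace SB5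

open PresentedMonoid FiveGen

variable (n : ℕ)

def ps : PresentedMonoid (fiveGenRel n) := PresentedMonoid.of _ FiveGen.s
def psi : PresentedMonoid (fiveGenRel n) := PresentedMonoid.of _ FiveGen.si
def ps1 : PresentedMonoid (fiveGenRel n) := PresentedMonoid.of _ FiveGen.s1
def ps1i : PresentedMonoid (fiveGenRel n) := PresentedMonoid.of _ FiveGen.s1i
def px : PresentedMonoid (fiveGenRel n) := PresentedMonoid.of _ FiveGen.x1

def uPu : (PresentedMonoid (fiveGenRel n))ˣ :=
  ⟨ps n, psi n, by have hpm := pm_sound (fiveGenRel.inv₃ (n := n)); simp only [map_mul, map_one] at hpm ⊢; exact hpm,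
    by have hpm := pm_sound (fiveGenRel.inv₄ (n := n)); simp only [map_mul, map_one] at hpm ⊢; exact hpm⟩

def vPu : (PresentedMonoid (fiveGenRel n))ˣ :=
  ⟨ps1 n, ps1i n, by have hpm := pm_sound (fiveGenRel.inv₁ (n := n)); simp only [map_mul, map_one] at hpm ⊢; exact hpm,
    by have hpm := pm_sound (fiveGenRel.inv₂ (n := n)); simp only [map_mul, map_one] at hpm ⊢; exact hpm⟩

def BPu (k : ℕ) : (PresentedMonoid (fiveGenRel n))ˣ :=
  uPu n ^ k * vPu n * (uPu n ^ k)⁻¹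

variable {n}

theorem BPu_val (k : ℕ) : ((BPu n k : (PresentedMonoid (fiveGenRel n))ˣ) : PresentedMonoid (fiveGenRel n))
    = ps n ^ k * ps1 n * psi n ^ k := by
  show ((uPu n ^ k * vPu n * (uPu n ^ k)⁻¹ : _ˣ) : PresentedMonoid (fiveGenRel n)) = _
  rw [Units.val_mul, Units.val_mul, ← inv_pow, Units.val_pow_eq_pow_val,
    Units.val_pow_eq_pow_val]
  rfl

theorem hrel2 : (ps n) ^ n = (ps n * ps1 n) ^ (n-1) := by
  have hpm := pm_sound (fiveGenRel.rel₂ (n := n)); simp only [map_pow, map_mul] at hpm ⊢; exact hpm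

theorem hrel2u : (uPu n) ^ n = (uPu n * vPu n) ^ (n-1) := by
  apply Units.ext
  rw [Units.val_pow_eq_pow_val, Units.val_pow_eq_pow_val, Units.val_mul]
  exact hrel2

theorem F1u : uPu n ^ n * vPu n = vPu n * uPu n ^ n := by
  have h1 : (uPu n * vPu n) * uPu n ^ n = uPu n ^ n * (uPu n * vPu n) := by
    rw [hrel2u]
    exact (Commute.self_pow (uPu n * vPu n) (n-1)).eq
  have h2 : uPu n * (vPu n * uPu n ^ n) = uPu n * (uPu n ^ n * vPu n) := by
    calc uPu n * (vPu n * uPu n ^ n) = (uPu n * vPu n) * uPu n ^ n := by rw [mul_assoc]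
      _ = uPu n ^ n * (uPu n * vPu n) := h1
      _ = (uPu n ^ n * uPu n) * vPu n := by rw [mul_assoc]
      _ = (uPu n * uPu n ^ n) * vPu n := by rw [(Commute.self_pow _ _).eq]
      _ = uPu n * (uPu n ^ n * vPu n) := by rw [mul_assoc]
  exact (mul_left_cancel h2).symm

theorem conj_mul {G : Type*} [Group G] (g x y : G) :
    g * (x * y) * g⁻¹ = (g * x * g⁻¹) * (g * y * g⁻¹) := by group

theorem comm_conj {G : Type*} [Group G] {a b : G} (g : G) (h : Commute a b) :
    Commute (g * a * g⁻¹) (g * b * g⁻¹) := by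
  have e : ∀ x y : G, (g*x*g⁻¹) * (g*y*g⁻¹) = g * (x*y) * g⁻¹ := by intro x y; group
  show (g*a*g⁻¹) * (g*b*g⁻¹) = (g*b*g⁻¹) * (g*a*g⁻¹)
  rw [e, e, h.eq]

theorem BP_shift (j k : ℕ) : uPu n ^ j * BPu n k * (uPu n ^ j)⁻¹ = BPu n (j+k) := by
  show uPu n ^ j * (uPu n ^ k * vPu n * (uPu n ^ k)⁻¹) * (uPu n ^ j)⁻¹ = _
  rw [BPu, pow_add]
  group

theorem BP_zero : BPu n 0 = vPu n := by simp [BPu]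

theorem BP_n : BPu n n = vPu n := by
  rw [BPu, F1u, mul_inv_cancel_right]

theorem comm_vB_direct {k : ℕ} (h1 : 2 ≤ k) (h2 : 2*k ≤ n) :
    Commute (vPu n) (BPu n k) := by
  apply Units.ext
  rw [Units.val_mul, Units.val_mul, BPu_val]
  show ps1 n * (ps n ^ k * ps1 n * psi n ^ k) = (ps n ^ k * ps1 n * psi n ^ k) * ps1 n
  have := pm_sound (fiveGenRel.rel₁ (n := n) k h1 h2)
  simp only [map_mul, map_pow, mul_assoc] at this ⊢; exact this

theorem comm_vB {k : ℕ} (h1 : 2 ≤ k) (h2 : k ≤ n - 2) (hn : 3 ≤ n) :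
    Commute (vPu n) (BPu n k) := by
  by_cases hc : 2*k ≤ n
  · exact comm_vB_direct h1 hc
  · have h0 : Commute (vPu n) (BPu n (n-k)) :=
      comm_vB_direct (by omega) (by omega)
    have h3 := comm_conj (uPu n ^ k) h0
    rw [BP_shift] at h3
    rw [(by omega : k + (n-k) = n), BP_n] at h3
    have h4 : uPu n ^ k * vPu n * (uPu n ^ k)⁻¹ = BPu n k := rfl
    rw [h4] at h3
    exact h3.symm

theorem comm_BB {i j : ℕ} (h1 : i + 2 ≤ j) (h2 : j ≤ i + (n-2)) (hn : 3 ≤ n) :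
    Commute (BPu n i) (BPu n j) := by
  have h0 : Commute (vPu n) (BPu n (j-i)) := comm_vB (by omega) (by omega) hn
  have h3 := comm_conj (uPu n ^ i) h0
  rw [BP_shift, (by omega : i + (j-i) = j)] at h3
  have h4 : uPu n ^ i * vPu n * (uPu n ^ i)⁻¹ = BPu n i := rfl
  rw [h4] at h3
  exact h3

variable (n)

def WBPg (j : ℕ) : ℕ → (PresentedMonoid (fiveGenRel n))ˣ
  | 0 => 1
  | (k+1) => WBPg j k * BPu n (j+k)

def CPu : ℕ → (PresentedMonoid (fiveGenRel n))ˣ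
  | 0 => 1
  | (m+1) => ((uPu n ^ m)⁻¹ * vPu n * uPu n ^ m) * CPu m

variable {n}

theorem WBPg_cons (j k : ℕ) : WBPg n j (k+1) = BPu n j * WBPg n (j+1) k := by
  induction k generalizing j with
  | zero => simp [WBPg]
  | succ k ih =>
      show WBPg n j (k+1) * BPu n (j+(k+1)) = BPu n j * (WBPg n (j+1) k * BPu n (j+1+k))
      rw [ih, mul_assoc, (by omega : j+(k+1) = j+1+k)]

theorem conj_WBPg (j k : ℕ) : uPu n * WBPg n j k * (uPu n)⁻¹ = WBPg n (j+1) k := by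
  induction k with
  | zero => simp [WBPg]
  | succ k ih =>
      show uPu n * (WBPg n j k * BPu n (j+k)) * (uPu n)⁻¹ = WBPg n (j+1) k * BPu n (j+1+k)
      rw [conj_mul, ih]
      congr 1
      have h' := BP_shift (n := n) 1 (j+k)
      rw [pow_one] at h'
      rw [h', (by omega : 1+(j+k) = j+1+k)]

theorem uv_pow (m : ℕ) : (uPu n * vPu n) ^ m = uPu n ^ m * CPu n m := by
  induction m with
  | zero => simp [CPu]
  | succ m ih =>
      rw [pow_succ', ih]
      show uPu n * vPu n * (uPu n ^ m * CPu n m)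
        = uPu n ^ (m+1) * (((uPu n ^ m)⁻¹ * vPu n * uPu n ^ m) * CPu n m)
      rw [pow_succ']
      group

theorem uP_eq_CP (hn : 3 ≤ n) : uPu n = CPu n (n-1) := by
  have h1 : uPu n ^ n = uPu n ^ (n-1) * CPu n (n-1) := by
    rw [← uv_pow, ← hrel2u]
  have h2 : uPu n ^ n = uPu n ^ (n-1) * uPu n := by
    rw [← pow_succ, (by omega : n - 1 + 1 = n)]
  rw [h2] at h1
  exact mul_left_cancel h1

theorem kp : ∀ m : ℕ, uPu n ^ m * CPu n (m+1) * (uPu n ^ m)⁻¹ = WBPg n 0 (m+1) := by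
  intro m
  induction m with
  | zero => simp [CPu, WBPg, BPu]
  | succ m ih =>
      show uPu n ^ (m+1) * (((uPu n ^ (m+1))⁻¹ * vPu n * uPu n ^ (m+1)) * CPu n (m+1))
          * (uPu n ^ (m+1))⁻¹ = WBPg n 0 (m+2)
      have e1 : uPu n ^ (m+1) * (((uPu n ^ (m+1))⁻¹ * vPu n * uPu n ^ (m+1)) * CPu n (m+1))
          * (uPu n ^ (m+1))⁻¹
          = vPu n * (uPu n * (uPu n ^ m * CPu n (m+1) * (uPu n ^ m)⁻¹) * (uPu n)⁻¹) := by
        rw [pow_succ']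
        group
      rw [e1, ih, conj_WBPg]
      rw [WBPg_cons 0 (m+1), BP_zero]

theorem uP_eq_WBP (hn : 3 ≤ n) : uPu n = WBPg n 0 (n-1) := by
  have h2 : CPu n (n-1) = CPu n ((n-2)+1) := by rw [(by omega : n-2+1 = n-1)]
  calc uPu n = uPu n ^ (n-2) * uPu n * (uPu n ^ (n-2))⁻¹ := by group
    _ = uPu n ^ (n-2) * CPu n ((n-2)+1) * (uPu n ^ (n-2))⁻¹ := by
        rw [← h2, ← uP_eq_CP hn]
    _ = WBPg n 0 ((n-2)+1) := kp (n-2)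
    _ = WBPg n 0 (n-1) := by rw [(by omega : n - 2 + 1 = n - 1)]

theorem comm_B0_WBPg {k : ℕ} (h : k ≤ n - 3) (hn : 3 ≤ n) :
    Commute (BPu n 0) (WBPg n 2 k) := by
  induction k with
  | zero => exact Commute.one_right _
  | succ k ih =>
      exact (ih (by omega)).mul_right (comm_BB (by omega) (by omega) hn)

theorem braid_u (hn : 3 ≤ n) :
    BPu n 0 * BPu n 1 * BPu n 0 = BPu n 1 * (BPu n 0 * BPu n 1) := by
  have hshift : uPu n * BPu n 0 = BPu n 1 * uPu n := by
    have := BP_shift (n := n) 1 0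
    rw [pow_one] at this
    have h2 : uPu n * BPu n 0 * (uPu n)⁻¹ * uPu n = BPu n (1+0) * uPu n := by rw [this]
    simpa [mul_assoc] using h2
  have hdec : WBPg n 0 (n-1) = BPu n 0 * (BPu n 1 * WBPg n 2 (n-3)) := by
    rw [(by omega : n - 1 = (n-3) + 1 + 1), WBPg_cons, WBPg_cons]
  have hW : Commute (BPu n 0) (WBPg n 2 (n-3)) := comm_B0_WBPg (le_refl _) hn
  have key : (BPu n 0 * (BPu n 1 * WBPg n 2 (n-3))) * BPu n 0
      = BPu n 1 * (BPu n 0 * (BPu n 1 * WBPg n 2 (n-3))) := by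
    rw [← hdec, ← uP_eq_WBP hn, hshift, uP_eq_WBP hn, hdec]
  have lhs : (BPu n 0 * (BPu n 1 * WBPg n 2 (n-3))) * BPu n 0
      = (BPu n 0 * BPu n 1 * BPu n 0) * WBPg n 2 (n-3) := by
    simp only [mul_assoc]
    rw [← hW.eq]
  have rhs : BPu n 1 * (BPu n 0 * (BPu n 1 * WBPg n 2 (n-3)))
      = (BPu n 1 * (BPu n 0 * BPu n 1)) * WBPg n 2 (n-3) := by
    simp only [mul_assoc]
  rw [lhs, rhs] at key
  exact mul_right_cancel key

theorem braid_all (i : ℕ) (hn : 3 ≤ n) :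
    BPu n i * BPu n (i+1) * BPu n i = BPu n (i+1) * (BPu n i * BPu n (i+1)) := by
  have h := congrArg (fun x => uPu n ^ i * x * (uPu n ^ i)⁻¹) (braid_u (n := n) hn)
  rw [conj_mul _ (BPu n 0 * BPu n 1) (BPu n 0), conj_mul _ (BPu n 0) (BPu n 1),
    conj_mul _ (BPu n 1) (BPu n 0 * BPu n 1), conj_mul _ (BPu n 0) (BPu n 1)] at h
  simp only [BP_shift] at h
  simpa using h

end SB5
namespace SB5

open PresentedMonoid FiveGen

variable (n : ℕ)

def pxc (k : ℕ) : PresentedMonoid (fiveGenRel n) := ps n ^ k * px n * psi n ^ k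

variable {n}

theorem psk_psik (k : ℕ) : ps n ^ k * psi n ^ k = 1 := by
  have h : ((uPu n ^ k * (uPu n ^ k)⁻¹ : _ˣ) : PresentedMonoid (fiveGenRel n)) = 1 := by
    rw [mul_inv_cancel]; rfl
  rwa [Units.val_mul, ← inv_pow, Units.val_pow_eq_pow_val, Units.val_pow_eq_pow_val] at h

theorem psik_psk (k : ℕ) : psi n ^ k * ps n ^ k = 1 := by
  have h : (((uPu n ^ k)⁻¹ * uPu n ^ k : _ˣ) : PresentedMonoid (fiveGenRel n)) = 1 := by
    rw [inv_mul_cancel]; rfl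
  rwa [Units.val_mul, ← inv_pow, Units.val_pow_eq_pow_val, Units.val_pow_eq_pow_val] at h

theorem mulP (k : ℕ) (x y : PresentedMonoid (fiveGenRel n)) :
    (ps n ^ k * x * psi n ^ k) * (ps n ^ k * y * psi n ^ k) = ps n ^ k * (x * y) * psi n ^ k := by
  have h := psik_psk (n := n) k
  calc (ps n ^ k * x * psi n ^ k) * (ps n ^ k * y * psi n ^ k)
      = ps n ^ k * (x * ((psi n ^ k * ps n ^ k) * (y * psi n ^ k))) := by
        simp only [mul_assoc]
    _ = ps n ^ k * (x * y) * psi n ^ k := by rw [h, one_mul]; simp only [mul_assoc]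

theorem comm_conjP {x y : PresentedMonoid (fiveGenRel n)} (k : ℕ) (h : Commute x y) :
    Commute (ps n ^ k * x * psi n ^ k) (ps n ^ k * y * psi n ^ k) := by
  show (ps n ^ k * x * psi n ^ k) * (ps n ^ k * y * psi n ^ k)
      = (ps n ^ k * y * psi n ^ k) * (ps n ^ k * x * psi n ^ k)
  rw [mulP, mulP, h.eq]

theorem conjP_add (i k : ℕ) (z : PresentedMonoid (fiveGenRel n)) :
    ps n ^ i * (ps n ^ k * z * psi n ^ k) * psi n ^ i = ps n ^ (i+k) * z * psi n ^ (i+k) := by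
  have e1 : ps n ^ (i+k) = ps n ^ i * ps n ^ k := by rw [pow_add]
  have e2 : psi n ^ (i+k) = psi n ^ k * psi n ^ i := by
    rw [(by omega : i+k = k+i), pow_add]
  rw [e1, e2]; simp only [mul_assoc]

theorem pxc_zero : pxc n 0 = px n := by simp [pxc]

theorem pxc_add (i k : ℕ) : ps n ^ i * pxc n k * psi n ^ i = pxc n (i+k) := conjP_add i k _

theorem hrel5 : ps n ^ n * px n = px n * ps n ^ n := by
  have hpm := pm_sound (fiveGenRel.rel₅ (n := n)); simp only [map_mul, map_pow] at hpm ⊢; exact hpm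

theorem pxc_n : pxc n n = px n := by
  show ps n ^ n * px n * psi n ^ n = px n
  rw [hrel5, mul_assoc, psk_psik, mul_one]

theorem conj_Bval (i k : ℕ) :
    ps n ^ i * ((BPu n k : _ˣ) : PresentedMonoid (fiveGenRel n)) * psi n ^ i
      = ((BPu n (i+k) : _ˣ) : PresentedMonoid (fiveGenRel n)) := by
  rw [BPu_val, BPu_val]
  exact conjP_add i k (ps1 n)

theorem comm_px_B_direct {k : ℕ} (h : k = 0 ∨ (2 ≤ k ∧ k ≤ n - 2)) :
    Commute (px n) ((BPu n k : _ˣ) : PresentedMonoid (fiveGenRel n)) := by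
  rw [BPu_val]
  have := pm_sound (fiveGenRel.rel₃ (n := n) k h)
  show px n * (ps n ^ k * ps1 n * psi n ^ k) = (ps n ^ k * ps1 n * psi n ^ k) * px n
  simp only [map_mul, map_pow, mul_assoc] at this ⊢; exact this

theorem comm_px_pxc_direct {k : ℕ} (h1 : 2 ≤ k) (h2 : 2*k ≤ n) :
    Commute (px n) (pxc n k) := by
  have := pm_sound (fiveGenRel.rel₄ (n := n) k h1 h2)
  show px n * (ps n ^ k * px n * psi n ^ k) = (ps n ^ k * px n * psi n ^ k) * px n
  simp only [map_mul, map_pow, mul_assoc] at this ⊢; exact this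

theorem comm_px_pxc {k : ℕ} (h1 : 2 ≤ k) (h2 : k ≤ n - 2) (hn : 3 ≤ n) :
    Commute (px n) (pxc n k) := by
  by_cases hc : 2*k ≤ n
  · exact comm_px_pxc_direct h1 hc
  · have h0 : Commute (px n) (pxc n (n-k)) := comm_px_pxc_direct (by omega) (by omega)
    have h3 := comm_conjP k h0
    rw [pxc_add, (by omega : k + (n-k) = n), pxc_n] at h3
    have h4 : ps n ^ k * px n * psi n ^ k = pxc n k := rfl
    rw [h4] at h3
    exact h3.symm

theorem comm_pxc_pxc {i j : ℕ} (h1 : i + 2 ≤ j) (h2 : j ≤ n - 2) (hn : 3 ≤ n) :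
    Commute (pxc n i) (pxc n j) := by
  have h0 : Commute (px n) (pxc n (j-i)) := comm_px_pxc (by omega) (by omega) hn
  have h3 := comm_conjP i h0
  rw [pxc_add, (by omega : i + (j-i) = j)] at h3
  have h4 : ps n ^ i * px n * psi n ^ i = pxc n i := rfl
  rw [h4] at h3
  exact h3

theorem comm_pxc_B {i j : ℕ} (hi : i ≤ n - 2) (hj : j ≤ n - 2)
    (hd1 : i + 1 ≠ j) (hd2 : j + 1 ≠ i) (hn : 3 ≤ n) :
    Commute (pxc n i) ((BPu n j : _ˣ) : PresentedMonoid (fiveGenRel n)) := by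
  rcases le_or_gt i j with hij | hij
  · have h0 : Commute (px n) ((BPu n (j-i) : _ˣ) : PresentedMonoid (fiveGenRel n)) :=
      comm_px_B_direct (by omega)
    have h3 := comm_conjP i h0
    rw [conj_Bval, (by omega : i + (j-i) = j)] at h3
    have h4 : ps n ^ i * px n * psi n ^ i = pxc n i := rfl
    rw [h4] at h3
    exact h3
  · have hd : 2 ≤ i - j := by omega
    have h0 : Commute (px n) ((BPu n (n-(i-j)) : _ˣ) : PresentedMonoid (fiveGenRel n)) :=
      comm_px_B_direct (by omega)
    have h3 := comm_conjP (i-j) h0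
    rw [conj_Bval, (by omega : (i-j) + (n-(i-j)) = n)] at h3
    have hBn : (BPu n n) = BPu n 0 := by rw [BP_n, BP_zero]
    rw [hBn] at h3
    have h4 := comm_conjP j h3
    rw [conj_Bval, Nat.add_zero] at h4
    have h5 : ps n ^ j * (ps n ^ (i-j) * px n * psi n ^ (i-j)) * psi n ^ j = pxc n i := by
      rw [conjP_add, (by omega : j + (i-j) = i)]; rfl
    rw [h5] at h4
    exact h4

theorem Trel :
    px n * (((BPu n 1 : _ˣ) : PresentedMonoid (fiveGenRel n))
        * ((BPu n 0 : _ˣ) : PresentedMonoid (fiveGenRel n)))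
      = ((BPu n 1 : _ˣ) : PresentedMonoid (fiveGenRel n))
        * (((BPu n 0 : _ˣ) : PresentedMonoid (fiveGenRel n)) * pxc n 1) := by
  rw [BPu_val, BPu_val, pxc]
  simp only [pow_one, pow_zero, one_mul, mul_one]
  have := pm_sound (fiveGenRel.rel₆ (n := n))
  simp only [map_mul, mul_assoc] at this ⊢; exact this

end SB5
namespace SB5

open PresentedMonoid FiveGen

variable {n : ℕ}

local notation "P" => PresentedMonoid (fiveGenRel n)

theorem conjP_mul (k : ℕ) (x y : P) :
    ps n ^ k * (x * y) * psi n ^ k = (ps n ^ k * x * psi n ^ k) * (ps n ^ k * y * psi n ^ k) :=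
  (mulP k x y).symm

/-- braid_x₂ analogue in P, at every index -/
theorem Tall (i : ℕ) :
    pxc n i * (((BPu n (i+1) : _ˣ) : P) * ((BPu n i : _ˣ) : P))
      = ((BPu n (i+1) : _ˣ) : P) * (((BPu n i : _ˣ) : P) * pxc n (i+1)) := by
  have h := congrArg (fun z => ps n ^ i * z * psi n ^ i) (Trel (n := n))
  rw [conjP_mul i (px n), conjP_mul i _ ((BPu n 0 : _ˣ) : P),
    conjP_mul i ((BPu n 1 : _ˣ) : P), conjP_mul i ((BPu n 0 : _ˣ) : P)] at h
  rw [conj_Bval i 1, conj_Bval i 0, Nat.add_zero] at h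
  have e1 : ps n ^ i * px n * psi n ^ i = pxc n i := rfl
  have e2 : ps n ^ i * pxc n 1 * psi n ^ i = pxc n (i+1) := pxc_add i 1
  rw [e1, e2] at h
  exact h

theorem comm_px_WBPg {k : ℕ} (h : k ≤ n - 3) :
    Commute (px n) ((WBPg n 2 k : _ˣ) : P) := by
  induction k with
  | zero => exact Commute.one_right _
  | succ k ih =>
      have e : ((WBPg n 2 (k+1) : _ˣ) : P)
          = ((WBPg n 2 k : _ˣ) : P) * ((BPu n (2+k) : _ˣ) : P) := rfl
      rw [e]
      exact (ih (by omega)).mul_right (comm_px_B_direct (Or.inr ⟨by omega, by omega⟩))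

/-- braid_x₁ analogue in P at index 0 -/
theorem bx1_0 (hn : 3 ≤ n) :
    pxc n 1 * (((BPu n 0 : _ˣ) : P) * ((BPu n 1 : _ˣ) : P))
      = ((BPu n 0 : _ˣ) : P) * (((BPu n 1 : _ˣ) : P) * px n) := by
  set W3 := WBPg n 2 (n-3) with hW3
  have hdec : uPu n = BPu n 0 * (BPu n 1 * W3) := by
    rw [uP_eq_WBP hn, (by omega : n - 1 = (n-3) + 1 + 1), WBPg_cons, WBPg_cons]
  have hxW : Commute (px n) ((W3 : _ˣ) : P) := comm_px_WBPg (by omega)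
  have hu1 : (uPu n)⁻¹ * (BPu n 0 * BPu n 1) = W3⁻¹ := by
    rw [hdec]; group
  have hu2 : uPu n * W3⁻¹ = BPu n 0 * BPu n 1 := by
    rw [hdec]; group
  have e0 : pxc n 1 = ps n * px n * psi n := by rw [pxc, pow_one, pow_one]
  have epsi : psi n = (((uPu n)⁻¹ : _ˣ) : P) := rfl
  have eps : ps n = ((uPu n : _ˣ) : P) := rfl
  calc pxc n 1 * (((BPu n 0 : _ˣ) : P) * ((BPu n 1 : _ˣ) : P))
      = ps n * px n * (psi n * ((BPu n 0 * BPu n 1 : _ˣ) : P)) := by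
        rw [e0, Units.val_mul]; simp only [mul_assoc]
    _ = ps n * px n * ((W3⁻¹ : _ˣ) : P) := by
        rw [epsi, ← Units.val_mul, hu1]
    _ = ps n * ((W3⁻¹ : _ˣ) : P) * px n := by
        rw [mul_assoc, (hxW.units_inv_right).eq, ← mul_assoc]
    _ = ((BPu n 0 * BPu n 1 : _ˣ) : P) * px n := by
        rw [eps, ← Units.val_mul, hu2]
    _ = ((BPu n 0 : _ˣ) : P) * (((BPu n 1 : _ˣ) : P) * px n) := by
        rw [Units.val_mul, mul_assoc]

/-- braid_x₁ analogue in P at every index -/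
theorem bx1_all (i : ℕ) (hn : 3 ≤ n) :
    pxc n (i+1) * (((BPu n i : _ˣ) : P) * ((BPu n (i+1) : _ˣ) : P))
      = ((BPu n i : _ˣ) : P) * (((BPu n (i+1) : _ˣ) : P) * pxc n i) := by
  have h := congrArg (fun z => ps n ^ i * z * psi n ^ i) (bx1_0 (n := n) hn)
  rw [conjP_mul i (pxc n 1) (((BPu n 0 : _ˣ) : P) * ((BPu n 1 : _ˣ) : P)),
    conjP_mul i ((BPu n 0 : _ˣ) : P) ((BPu n 1 : _ˣ) : P),
    conjP_mul i ((BPu n 0 : _ˣ) : P) (((BPu n 1 : _ˣ) : P) * px n),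
    conjP_mul i ((BPu n 1 : _ˣ) : P) (px n)] at h
  rw [conj_Bval i 1, conj_Bval i 0, Nat.add_zero] at h
  have e1 : ps n ^ i * px n * psi n ^ i = pxc n i := rfl
  have e2 : ps n ^ i * pxc n 1 * psi n ^ i = pxc n (i+1) := pxc_add i 1
  rw [e1, e2] at h
  exact h

variable (n)

/-- generator images for ψ : SBₙ → P -/
def ψf : SBGen n → P := fun g =>
  match g with
  | .sig i => ((BPu n i.val : _ˣ) : P)
  | .sinv i => (((BPu n i.val)⁻¹ : _ˣ) : P)
  | .x i => pxc n i.val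

variable {n}

theorem ψf_sig (i : Fin (n-1)) : ψf n (SBGen.sig i) = ((BPu n i.val : _ˣ) : P) := rfl
theorem ψf_sinv (i : Fin (n-1)) : ψf n (SBGen.sinv i) = (((BPu n i.val)⁻¹ : _ˣ) : P) := rfl
theorem ψf_x (i : Fin (n-1)) : ψf n (SBGen.x i) = pxc n i.val := rfl

theorem unit_comm_val {u w : Pˣ} (h : Commute u w) : (u : P) * w = (w : P) * u := by
  have := congrArg (Units.val) h.eq
  simpa only [Units.val_mul] using this

theorem ψ_check (hn : 3 ≤ n) : ∀ a b : FreeMonoid (SBGen n), sbRel n a b →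
    FreeMonoid.lift (ψf n) a = FreeMonoid.lift (ψf n) b := by
  intro a b hr
  induction hr with
  | comm_ss i j h =>
      simp only [map_mul, FreeMonoid.lift_eval_of, ψf_sig]
      rcases h with h | h
      · exact unit_comm_val (comm_BB (by omega) (by omega : j.val ≤ i.val + (n-2)) hn)
      · exact (unit_comm_val (comm_BB (by omega) (by omega : i.val ≤ j.val + (n-2)) hn)).symm
  | comm_xx i j h =>
      simp only [map_mul, FreeMonoid.lift_eval_of, ψf_x]
      rcases h with h | h
      · exact (comm_pxc_pxc (by omega) (by omega) hn).eq
      · exact ((comm_pxc_pxc (by omega) (by omega) hn).symm).eq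
  | comm_xs i j h =>
      simp only [map_mul, FreeMonoid.lift_eval_of, ψf_x, ψf_sig]
      exact (comm_pxc_B (by omega) (by omega) h.1 h.2 hn).eq
  | braid i j h =>
      simp only [map_mul, FreeMonoid.lift_eval_of, ψf_sig, h]
      have hb := braid_all (n := n) i.val hn
      have := congrArg (Units.val) hb
      simpa only [Units.val_mul, mul_assoc] using this
  | braid_x₁ i j h =>
      simp only [map_mul, FreeMonoid.lift_eval_of, ψf_sig, ψf_x, h]
      have := (bx1_all (n := n) i.val hn).symm
      simpa only [mul_assoc] using this
  | braid_x₂ i j h =>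
      simp only [map_mul, FreeMonoid.lift_eval_of, ψf_sig, ψf_x, h]
      have := (Tall (n := n) i.val).symm
      simpa only [mul_assoc] using this
  | inv_right i =>
      simp only [map_mul, map_one, FreeMonoid.lift_eval_of, ψf_sig, ψf_sinv]
      rw [← Units.val_mul, mul_inv_cancel, Units.val_one]
  | inv_left i =>
      simp only [map_mul, map_one, FreeMonoid.lift_eval_of, ψf_sig, ψf_sinv]
      rw [← Units.val_mul, inv_mul_cancel, Units.val_one]

variable (n)

/-- the homomorphism ψ : SBₙ → P -/
def ψh (hn : 3 ≤ n) : SingBraidMonoid n →* PresentedMonoid (fiveGenRel n) :=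
  PresentedMonoid.lift (ψf n) (ψ_check hn)

end SB5
namespace SB5

open PresentedMonoid FiveGen

variable {n : ℕ}

local notation "P" => PresentedMonoid (fiveGenRel n)
local notation "S" => SingBraidMonoid n

theorem wDk_wBk (k : ℕ) : wA n 0 (n-1) ^ k * wB n 0 (n-1) ^ k = 1 := by
  have h : ((uW n 0 (n-1) ^ k * (uW n 0 (n-1) ^ k)⁻¹ : _ˣ) : S) = 1 := by
    rw [mul_inv_cancel]; rfl
  rwa [Units.val_mul, ← inv_pow, Units.val_pow_eq_pow_val, Units.val_pow_eq_pow_val] at h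

theorem wBk_wDk (k : ℕ) : wB n 0 (n-1) ^ k * wA n 0 (n-1) ^ k = 1 := by
  have h : (((uW n 0 (n-1) ^ k)⁻¹ * uW n 0 (n-1) ^ k : _ˣ) : S) = 1 := by
    rw [inv_mul_cancel]; rfl
  rwa [Units.val_mul, ← inv_pow, Units.val_pow_eq_pow_val, Units.val_pow_eq_pow_val] at h

theorem mulS (k : ℕ) (x y : S) :
    (wA n 0 (n-1) ^ k * x * wB n 0 (n-1) ^ k) * (wA n 0 (n-1) ^ k * y * wB n 0 (n-1) ^ k)
      = wA n 0 (n-1) ^ k * (x * y) * wB n 0 (n-1) ^ k := by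
  have h := wBk_wDk (n := n) k
  calc (wA n 0 (n-1) ^ k * x * wB n 0 (n-1) ^ k) * (wA n 0 (n-1) ^ k * y * wB n 0 (n-1) ^ k)
      = wA n 0 (n-1) ^ k * (x * ((wB n 0 (n-1) ^ k * wA n 0 (n-1) ^ k) * (y * wB n 0 (n-1) ^ k))) := by
        simp only [mul_assoc]
    _ = wA n 0 (n-1) ^ k * (x * y) * wB n 0 (n-1) ^ k := by
        rw [h, one_mul]; simp only [mul_assoc]

theorem conjaD {k : ℕ} (h : k + 1 ≤ n - 1) :
    wA n 0 (n-1) ^ k * aS n 0 * wB n 0 (n-1) ^ k = aS n k := by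
  rw [shift_pow_a (n := n) (i := 0) (k := k) (by omega), Nat.zero_add, mul_assoc, wDk_wBk, mul_one]

theorem conjxD {k : ℕ} (h : k + 1 ≤ n - 1) :
    wA n 0 (n-1) ^ k * xS n 0 * wB n 0 (n-1) ^ k = xS n k := by
  rw [shift_pow_x (n := n) (i := 0) (k := k) (by omega), Nat.zero_add, mul_assoc, wDk_wBk, mul_one]

variable (n)

/-- generator images for φ : P → SBₙ -/
def φf : FiveGen → S := fun g =>
  match g with
  | .s1 => aS n 0
  | .s1i => bS n 0
  | .s => wA n 0 (n-1)
  | .si => wB n 0 (n-1)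
  | .x1 => xS n 0

variable {n}

theorem φf_s1 : φf n FiveGen.s1 = aS n 0 := rfl
theorem φf_s1i : φf n FiveGen.s1i = bS n 0 := rfl
theorem φf_s : φf n FiveGen.s = wA n 0 (n-1) := rfl
theorem φf_si : φf n FiveGen.si = wB n 0 (n-1) := rfl
theorem φf_x1 : φf n FiveGen.x1 = xS n 0 := rfl

theorem φ_check (hn : 3 ≤ n) : ∀ a b : FreeMonoid FiveGen, fiveGenRel n a b →
    FreeMonoid.lift (φf n) a = FreeMonoid.lift (φf n) b := by
  intro a b hr
  induction hr with
  | rel₁ i h₁ h₂ =>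
      simp only [map_mul, map_pow, FreeMonoid.lift_eval_of, φf_s1, φf_s, φf_si]
      have key : aS n 0 * (wA n 0 (n-1) ^ i * aS n 0 * wB n 0 (n-1) ^ i)
          = (wA n 0 (n-1) ^ i * aS n 0 * wB n 0 (n-1) ^ i) * aS n 0 := by
        rw [conjaD (by omega)]
        exact (comm_aa (by omega)).eq
      simpa only [mul_assoc] using key
  | rel₂ =>
      simp only [map_mul, map_pow, FreeMonoid.lift_eval_of, φf_s1, φf_s]
      exact rel2S hn
  | rel₃ i h =>
      simp only [map_mul, map_pow, FreeMonoid.lift_eval_of, φf_s1, φf_s, φf_si, φf_x1]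
      rcases h with h | h
      · subst h
        simp only [pow_zero, one_mul, mul_one]
        exact (comm_xa (by omega) (by omega)).eq
      · have key : xS n 0 * (wA n 0 (n-1) ^ i * aS n 0 * wB n 0 (n-1) ^ i)
            = (wA n 0 (n-1) ^ i * aS n 0 * wB n 0 (n-1) ^ i) * xS n 0 := by
          rw [conjaD (by omega)]
          exact (comm_xa (by omega) (by omega)).eq
        simpa only [mul_assoc] using key
  | rel₄ i h₁ h₂ =>
      simp only [map_mul, map_pow, FreeMonoid.lift_eval_of, φf_s, φf_si, φf_x1]
      have key : xS n 0 * (wA n 0 (n-1) ^ i * xS n 0 * wB n 0 (n-1) ^ i)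
          = (wA n 0 (n-1) ^ i * xS n 0 * wB n 0 (n-1) ^ i) * xS n 0 := by
        rw [conjxD (by omega)]
        exact (comm_xxS (by omega)).eq
      simpa only [mul_assoc] using key
  | rel₅ =>
      simp only [map_mul, map_pow, FreeMonoid.lift_eval_of, φf_s, φf_x1]
      exact ((rel5S hn).symm).eq
  | rel₆ =>
      simp only [map_mul, FreeMonoid.lift_eval_of, φf_s1, φf_s, φf_si, φf_x1]
      have conja1 : wA n 0 (n-1) * aS n 0 * wB n 0 (n-1) = aS n 1 := by
        have := conjaD (n := n) (k := 1) (by omega)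
        simpa only [pow_one] using this
      have conjx1 : wA n 0 (n-1) * xS n 0 * wB n 0 (n-1) = xS n 1 := by
        have := conjxD (n := n) (k := 1) (by omega)
        simpa only [pow_one] using this
      have hb : aS n 1 * (aS n 0 * xS n 1) = xS n 0 * (aS n 1 * aS n 0) := by
        have := braid_x2S (n := n) (k := 0) (by omega)
        simpa only [mul_assoc] using this
      have key : xS n 0 * ((wA n 0 (n-1) * aS n 0 * wB n 0 (n-1)) * aS n 0)
          = (wA n 0 (n-1) * aS n 0 * wB n 0 (n-1))
            * (aS n 0 * (wA n 0 (n-1) * xS n 0 * wB n 0 (n-1))) := by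
        rw [conja1, conjx1, hb.symm]
      simpa only [mul_assoc] using key
  | inv₁ =>
      simp only [map_mul, map_one, FreeMonoid.lift_eval_of, φf_s1, φf_s1i]
      exact aS_mul_bS 0
  | inv₂ =>
      simp only [map_mul, map_one, FreeMonoid.lift_eval_of, φf_s1, φf_s1i]
      exact bS_mul_aS 0
  | inv₃ =>
      simp only [map_mul, map_one, FreeMonoid.lift_eval_of, φf_s, φf_si]
      exact wA_mul_wB 0 (n-1)
  | inv₄ =>
      simp only [map_mul, map_one, FreeMonoid.lift_eval_of, φf_s, φf_si]
      exact wB_mul_wA 0 (n-1)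

variable (n)

/-- the homomorphism φ : P → SBₙ -/
def φh (hn : 3 ≤ n) : PresentedMonoid (fiveGenRel n) →* SingBraidMonoid n :=
  PresentedMonoid.lift (φf n) (φ_check hn)

end SB5
namespace SB5

open PresentedMonoid FiveGen

variable {n : ℕ}

local notation "P" => PresentedMonoid (fiveGenRel n)
local notation "S" => SingBraidMonoid n

theorem φh_of (hn : 3 ≤ n) (g : FiveGen) :
    φh n hn (PresentedMonoid.of _ g) = φf n g := rfl

theorem ψh_of (hn : 3 ≤ n) (g : SBGen n) :
    ψh n hn (PresentedMonoid.of _ g) = ψf n g := rfl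

theorem ψ_aS (hn : 3 ≤ n) {m : ℕ} (h : m < n - 1) :
    ψh n hn (aS n m) = ((BPu n m : _ˣ) : P) := by
  rw [aS_eq h, ψh_of]; rfl

theorem ψ_bS (hn : 3 ≤ n) {m : ℕ} (h : m < n - 1) :
    ψh n hn (bS n m) = (((BPu n m)⁻¹ : _ˣ) : P) := by
  rw [bS_eq h, ψh_of]; rfl

theorem ψ_wA (hn : 3 ≤ n) (j k : ℕ) (h : j + k ≤ n - 1) :
    ψh n hn (wA n j k) = ((WBPg n j k : _ˣ) : P) := by
  induction k with
  | zero => exact map_one _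
  | succ k ih =>
      show ψh n hn (wA n j k * aS n (j+k)) = ((WBPg n j k * BPu n (j+k) : _ˣ) : P)
      rw [map_mul, ih (by omega), ψ_aS hn (by omega), Units.val_mul]

theorem ψ_wB (hn : 3 ≤ n) (j k : ℕ) (h : j + k ≤ n - 1) :
    ψh n hn (wB n j k) = (((WBPg n j k)⁻¹ : _ˣ) : P) := by
  induction k with
  | zero => exact map_one _
  | succ k ih =>
      show ψh n hn (bS n (j+k) * wB n j k) = (((WBPg n j k * BPu n (j+k))⁻¹ : _ˣ) : P)
      rw [map_mul, ih (by omega), ψ_bS hn (by omega), mul_inv_rev, Units.val_mul]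

theorem comp1 (hn : 3 ≤ n) : (ψh n hn).comp (φh n hn) = MonoidHom.id P := by
  apply PresentedMonoid.ext
  intro g
  rw [MonoidHom.comp_apply, MonoidHom.id_apply]
  cases g with
  | s1 =>
      rw [φh_of, φf_s1, ψ_aS hn (by omega : 0 < n - 1)]
      rw [BP_zero]; rfl
  | s1i =>
      rw [φh_of, φf_s1i, ψ_bS hn (by omega : 0 < n - 1)]
      rw [BP_zero]; rfl
  | x1 =>
      rw [φh_of, φf_x1, xS_eq (by omega : 0 < n - 1), ψh_of]
      show pxc n 0 = px n
      exact pxc_zero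
  | s =>
      rw [φh_of, φf_s, ψ_wA hn 0 (n-1) (by omega), ← uP_eq_WBP hn]; rfl
  | si =>
      rw [φh_of, φf_si, ψ_wB hn 0 (n-1) (by omega), ← uP_eq_WBP hn]; rfl

theorem φ_ps (hn : 3 ≤ n) : φh n hn (ps n) = wA n 0 (n-1) := rfl
theorem φ_ps1 (hn : 3 ≤ n) : φh n hn (ps1 n) = aS n 0 := rfl
theorem φ_ps1i (hn : 3 ≤ n) : φh n hn (ps1i n) = bS n 0 := rfl
theorem φ_psi (hn : 3 ≤ n) : φh n hn (psi n) = wB n 0 (n-1) := rfl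
theorem φ_px (hn : 3 ≤ n) : φh n hn (px n) = xS n 0 := rfl

theorem BPu_inv_val (k : ℕ) :
    (((BPu n k)⁻¹ : _ˣ) : P) = ps n ^ k * ps1i n * psi n ^ k := by
  have e : (BPu n k)⁻¹ = uPu n ^ k * (vPu n)⁻¹ * (uPu n ^ k)⁻¹ := by
    rw [BPu]; group
  rw [e, Units.val_mul, Units.val_mul, ← inv_pow, Units.val_pow_eq_pow_val,
    Units.val_pow_eq_pow_val]
  rfl

theorem φ_Bval (hn : 3 ≤ n) {k : ℕ} (h : k + 1 ≤ n - 1) :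
    φh n hn ((BPu n k : _ˣ) : P) = aS n k := by
  rw [BPu_val, map_mul, map_mul, map_pow, map_pow]
  rw [φ_ps hn, φ_ps1 hn, φ_psi hn]
  exact conjaD h

theorem φ_Binv (hn : 3 ≤ n) {k : ℕ} (h : k + 1 ≤ n - 1) :
    φh n hn (((BPu n k)⁻¹ : _ˣ) : P) = bS n k := by
  rw [BPu_inv_val, map_mul, map_mul, map_pow, map_pow]
  rw [φ_ps hn, φ_ps1i hn, φ_psi hn]
  have h1 : aS n k * (wA n 0 (n-1) ^ k * bS n 0 * wB n 0 (n-1) ^ k) = 1 := by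
    rw [← conjaD h, mulS, aS_mul_bS, mul_one, wDk_wBk]
  calc wA n 0 (n-1) ^ k * bS n 0 * wB n 0 (n-1) ^ k
      = (bS n k * aS n k) * (wA n 0 (n-1) ^ k * bS n 0 * wB n 0 (n-1) ^ k) := by
        rw [bS_mul_aS, one_mul]
    _ = bS n k * (aS n k * (wA n 0 (n-1) ^ k * bS n 0 * wB n 0 (n-1) ^ k)) := by
        rw [mul_assoc]
    _ = bS n k := by rw [h1, mul_one]

theorem φ_pxc (hn : 3 ≤ n) {k : ℕ} (h : k + 1 ≤ n - 1) :
    φh n hn (pxc n k) = xS n k := by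
  rw [pxc, map_mul, map_mul, map_pow, map_pow]
  rw [φ_ps hn, φ_px hn, φ_psi hn]
  exact conjxD h

theorem comp2 (hn : 3 ≤ n) : (φh n hn).comp (ψh n hn) = MonoidHom.id S := by
  apply PresentedMonoid.ext
  intro g
  show (φh n hn) ((ψh n hn) (PresentedMonoid.of (sbRel n) g)) = PresentedMonoid.of (sbRel n) g
  cases g with
  | sig i =>
      rw [ψh_of, ψf_sig, φ_Bval hn (by omega : i.val + 1 ≤ n - 1), aS_eq i.isLt]
  | sinv i =>
      rw [ψh_of, ψf_sinv, φ_Binv hn (by omega : i.val + 1 ≤ n - 1), bS_eq i.isLt]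
  | x i =>
      rw [ψh_of, ψf_x, φ_pxc hn (by omega : i.val + 1 ≤ n - 1), xS_eq i.isLt]

theorem wA_range (m : ℕ) : ((List.range m).map (aS n)).prod = wA n 0 m := by
  induction m with
  | zero => rfl
  | succ m ih =>
      rw [List.range_succ, List.map_append, List.prod_append, ih, List.map_singleton,
        List.prod_singleton]
      exact (wA_succ0 m).symm

theorem ofFn_prod :
    (List.ofFn (fun i : Fin (n-1) => PresentedMonoid.of (sbRel n) (SBGen.sig i))).prod
      = wA n 0 (n-1) := by
  rw [List.ofFn_eq_map]
  have e : (List.finRange (n-1)).map (fun i : Fin (n-1) => PresentedMonoid.of (sbRel n) (SBGen.sig i))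
      = (List.finRange (n-1)).map (fun i : Fin (n-1) => aS n i.val) := by
    apply List.map_congr_left
    intro i _
    rw [aS_eq i.isLt]
  rw [e, show (fun i : Fin (n-1) => aS n i.val) = (aS n) ∘ Fin.val from rfl,
    ← List.map_map, (show (List.finRange (n-1)).map Fin.val = List.range (n-1) from List.ext_getElem (by simp) (by simp))]
  exact wA_range (n-1)

end SB5

theorem singular_braid_five_generator_presentation (n : ℕ) (hn : 3 ≤ n) :
    ∃ e : PresentedMonoid (fiveGenRel n) ≃* SingBraidMonoid n,
      e (PresentedMonoid.of (fiveGenRel n) FiveGen.s1) =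
        PresentedMonoid.of (sbRel n) (SBGen.sig ⟨0, by omega⟩) ∧
      e (PresentedMonoid.of (fiveGenRel n) FiveGen.x1) =
        PresentedMonoid.of (sbRel n) (SBGen.x ⟨0, by omega⟩) ∧
      e (PresentedMonoid.of (fiveGenRel n) FiveGen.s) =
        (List.ofFn (fun i : Fin (n - 1) =>
          PresentedMonoid.of (sbRel n) (SBGen.sig i))).prod := by
  refine ⟨MonoidHom.toMulEquiv (SB5.φh n hn) (SB5.ψh n hn) (SB5.comp1 hn) (SB5.comp2 hn),
    ?_, ?_, ?_⟩
  · show SB5.φh n hn (PresentedMonoid.of _ FiveGen.s1) = _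
    rw [SB5.φh_of, SB5.φf_s1, SB5.aS_eq (by omega : 0 < n - 1)]
  · show SB5.φh n hn (PresentedMonoid.of _ FiveGen.x1) = _
    rw [SB5.φh_of, SB5.φf_x1, SB5.xS_eq (by omega : 0 < n - 1)]
  · show SB5.φh n hn (PresentedMonoid.of _ FiveGen.s) = _
    rw [SB5.φh_of, SB5.φf_s, ← SB5.ofFn_prod]
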